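/- Let d ≥ 1, p ≥ 1, let θ : ℤ₀^d → ℝ be finitely supported and symmetric (θ_k = θ_l whenever |k| = |l|), and let Y : ℤ^d → [0,∞) satisfy Y(0) = 0 and ∑_{k∈ℤ^d} (1 + |k|²) Y_k < ∞. Then ∑_{k∈ℤ^d} ∑_{l∈ℤ₀^d} θ_l² |Π_l^⊥ k|² (Y_{k−l} − Y_k) Y_k^{p−1} = −(1/2) ∑_{l∈ℤ₀^d} ∑_{k∈ℤ^d} θ_l² |Π_l^⊥ k|² (Y_{k+l} − Y_k)(Y_{k+l}^{p−1} − Y_k^{p−1}), all series being absolutely convergent. -/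
import Mathlib


noncomputable section

/-- Euclidean inner product on `ℤ^d` (integer valued). -/
def ipZ {d : ℕ} (k l : Fin d → ℤ) : ℤ := ∑ i, k i * l i

/-- Squared Euclidean norm on `ℤ^d` (integer valued). -/
def nsqZ {d : ℕ} (k : Fin d → ℤ) : ℤ := ∑ i, (k i) ^ 2

namespace Stmt15Aux

variable {d : ℕ}

lemma nsqZ_nonneg (k : Fin d → ℤ) : 0 ≤ nsqZ k :=
  Finset.sum_nonneg fun _ _ => sq_nonneg _

lemma nsqZ_eq_zero {k : Fin d → ℤ} (h : nsqZ k = 0) : k = 0 := by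
  funext i
  have := (Finset.sum_eq_zero_iff_of_nonneg fun i _ => sq_nonneg (k i)).mp h i (Finset.mem_univ i)
  exact pow_eq_zero_iff two_ne_zero |>.mp this

lemma nsqZ_neg (k : Fin d → ℤ) : nsqZ (-k) = nsqZ k := by
  simp [nsqZ]

lemma ipZ_neg_right (k l : Fin d → ℤ) : ipZ k (-l) = -ipZ k l := by
  simp [ipZ, mul_neg]

lemma nsqZ_add (k l : Fin d → ℤ) : nsqZ (k + l) = nsqZ k + 2 * ipZ k l + nsqZ l := by
  unfold nsqZ ipZ
  rw [Finset.mul_sum, ← Finset.sum_add_distrib, ← Finset.sum_add_distrib]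
  exact Finset.sum_congr rfl fun i _ => by simp only [Pi.add_apply]; ring

lemma ipZ_add_left (k l : Fin d → ℤ) : ipZ (k + l) l = ipZ k l + nsqZ l := by
  unfold nsqZ ipZ
  rw [← Finset.sum_add_distrib]
  exact Finset.sum_congr rfl fun i _ => by simp only [Pi.add_apply]; ring

lemma nsqZ_add_le (x y : Fin d → ℤ) : nsqZ (x + y) ≤ 2 * nsqZ x + 2 * nsqZ y := by
  unfold nsqZ
  rw [Finset.mul_sum, Finset.mul_sum, ← Finset.sum_add_distrib]
  exact Finset.sum_le_sum fun i _ => by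
    simp only [Pi.add_apply]; nlinarith [sq_nonneg (x i - y i)]

lemma ipZ_sq_le (k l : Fin d → ℤ) : (ipZ k l) ^ 2 ≤ nsqZ k * nsqZ l := by
  simpa [ipZ, nsqZ] using Finset.sum_mul_sq_le_sq_mul_sq Finset.univ k l

lemma nsqZ_pos {l : Fin d → ℤ} (hl : l ≠ 0) : 0 < (nsqZ l : ℝ) := by
  have h := nsqZ_nonneg l
  have h2 : nsqZ l ≠ 0 := fun h0 => hl (nsqZ_eq_zero h0)
  exact_mod_cast lt_of_le_of_ne h (Ne.symm h2)

lemma c_nonneg {l : Fin d → ℤ} (k : Fin d → ℤ) (hl : l ≠ 0) :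
    0 ≤ (nsqZ k : ℝ) - (ipZ k l : ℝ) ^ 2 / (nsqZ l : ℝ) := by
  rw [sub_nonneg, div_le_iff₀ (nsqZ_pos hl)]
  exact_mod_cast ipZ_sq_le k l

lemma c_le {l : Fin d → ℤ} (k : Fin d → ℤ) (hl : l ≠ 0) :
    (nsqZ k : ℝ) - (ipZ k l : ℝ) ^ 2 / (nsqZ l : ℝ) ≤ (nsqZ k : ℝ) := by
  have : 0 ≤ (ipZ k l : ℝ) ^ 2 / (nsqZ l : ℝ) :=
    div_nonneg (sq_nonneg _) (nsqZ_pos hl).le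
  linarith

lemma c_shift (k : Fin d → ℤ) {l : Fin d → ℤ} (hl : l ≠ 0) :
    (nsqZ (k + l) : ℝ) - (ipZ (k + l) l : ℝ) ^ 2 / (nsqZ l : ℝ)
      = (nsqZ k : ℝ) - (ipZ k l : ℝ) ^ 2 / (nsqZ l : ℝ) := by
  have hl0 : (nsqZ l : ℝ) ≠ 0 := ne_of_gt (nsqZ_pos hl)
  have h1 : (nsqZ (k + l) : ℝ) = (nsqZ k : ℝ) + 2 * (ipZ k l : ℝ) + (nsqZ l : ℝ) := by
    push_cast [nsqZ_add]; ring
  have h2 : (ipZ (k + l) l : ℝ) = (ipZ k l : ℝ) + (nsqZ l : ℝ) := by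
    push_cast [ipZ_add_left]; ring
  rw [h1, h2]
  field_simp
  ring

lemma c_neg (k l : Fin d → ℤ) :
    (nsqZ k : ℝ) - (ipZ k (-l) : ℝ) ^ 2 / (nsqZ (-l) : ℝ)
      = (nsqZ k : ℝ) - (ipZ k l : ℝ) ^ 2 / (nsqZ l : ℝ) := by
  rw [nsqZ_neg, ipZ_neg_right]
  push_cast
  ring

/-- Core summability estimate. -/
lemma summable_core (Y : (Fin d → ℤ) → ℝ) (hY : ∀ k, 0 ≤ Y k)
    (hsum : Summable fun k : Fin d → ℤ => (1 + (nsqZ k : ℝ)) * Y k)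
    {l : Fin d → ℤ} (hl : l ≠ 0) (a : Fin d → ℤ) (g : (Fin d → ℤ) → ℝ)
    (B : ℝ) (hg : ∀ k, |g k| ≤ B) :
    Summable fun k : Fin d → ℤ =>
      ((nsqZ k : ℝ) - (ipZ k l : ℝ) ^ 2 / (nsqZ l : ℝ)) * (Y (k + a) * g k) := by
  have hB : 0 ≤ B := (abs_nonneg _).trans (hg 0)
  have hVsh : Summable fun k : Fin d → ℤ => (1 + (nsqZ (k + a) : ℝ)) * Y (k + a) :=
    ((Equiv.addRight a).summable_iff
      (f := fun k : Fin d → ℤ => (1 + (nsqZ k : ℝ)) * Y k)).mpr hsum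
  apply Summable.of_abs
  refine Summable.of_nonneg_of_le (fun k => abs_nonneg _) (fun k => ?_)
    (hVsh.mul_left (2 * (1 + (nsqZ a : ℝ)) * B))
  have hc0 : 0 ≤ (nsqZ k : ℝ) - (ipZ k l : ℝ) ^ 2 / (nsqZ l : ℝ) := c_nonneg k hl
  have hcle := c_le k hl
  have hna : 0 ≤ (nsqZ a : ℝ) := by exact_mod_cast nsqZ_nonneg a
  have hnk' : 0 ≤ (nsqZ (k + a) : ℝ) := by exact_mod_cast nsqZ_nonneg (k + a)
  have hkk : (nsqZ k : ℝ) ≤ 2 * (nsqZ (k + a) : ℝ) + 2 * (nsqZ a : ℝ) := by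
    have h := nsqZ_add_le (k + a) (-a)
    have h2 : k + a + -a = k := by abel
    rw [h2, nsqZ_neg] at h
    exact_mod_cast h
  have hYk : 0 ≤ Y (k + a) := hY _
  have hgk : |g k| ≤ B := hg k
  have habs : |((nsqZ k : ℝ) - (ipZ k l : ℝ) ^ 2 / (nsqZ l : ℝ)) * (Y (k + a) * g k)|
      = ((nsqZ k : ℝ) - (ipZ k l : ℝ) ^ 2 / (nsqZ l : ℝ)) * (Y (k + a) * |g k|) := by
    rw [abs_mul, abs_mul, abs_of_nonneg hc0, abs_of_nonneg hYk]
  rw [habs]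
  calc ((nsqZ k : ℝ) - (ipZ k l : ℝ) ^ 2 / (nsqZ l : ℝ)) * (Y (k + a) * |g k|)
      ≤ ((nsqZ k : ℝ) - (ipZ k l : ℝ) ^ 2 / (nsqZ l : ℝ)) * (Y (k + a) * B) :=
        mul_le_mul_of_nonneg_left (mul_le_mul_of_nonneg_left hgk hYk) hc0
    _ ≤ (2 * (nsqZ (k + a) : ℝ) + 2 * (nsqZ a : ℝ)) * (Y (k + a) * B) :=
        mul_le_mul_of_nonneg_right (hcle.trans hkk) (mul_nonneg hYk hB)
    _ ≤ 2 * (1 + (nsqZ a : ℝ)) * B * ((1 + (nsqZ (k + a) : ℝ)) * Y (k + a)) := by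
        nlinarith [mul_nonneg hYk hB,
          mul_nonneg (mul_nonneg hna hnk') (mul_nonneg hYk hB)]

/-- Negation as a permutation of `ℤ₀^d`. -/
def negPerm (d : ℕ) : Equiv.Perm {l : Fin d → ℤ // l ≠ 0} :=
  ⟨fun l => ⟨-l.1, fun h => l.2 (neg_eq_zero.mp h)⟩,
   fun l => ⟨-l.1, fun h => l.2 (neg_eq_zero.mp h)⟩,
   fun l => Subtype.ext (neg_neg _), fun l => Subtype.ext (neg_neg _)⟩

end Stmt15Aux

namespace Stmt15Aux

variable {d : ℕ}

/-- LHS inner summand. -/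
def FF (θ : {l : Fin d → ℤ // l ≠ 0} → ℝ) (Y : (Fin d → ℤ) → ℝ) (p : ℝ)
    (l : {l : Fin d → ℤ // l ≠ 0}) (k : Fin d → ℤ) : ℝ :=
  θ l ^ 2 * ((nsqZ k : ℝ) - (ipZ k l.1 : ℝ) ^ 2 / (nsqZ l.1 : ℝ)) *
    ((Y (k - l.1) - Y k) * Y k ^ (p - 1))

/-- RHS inner summand. -/
def GG (θ : {l : Fin d → ℤ // l ≠ 0} → ℝ) (Y : (Fin d → ℤ) → ℝ) (p : ℝ)
    (l : {l : Fin d → ℤ // l ≠ 0}) (k : Fin d → ℤ) : ℝ :=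
  θ l ^ 2 * ((nsqZ k : ℝ) - (ipZ k l.1 : ℝ) ^ 2 / (nsqZ l.1 : ℝ)) *
    ((Y (k + l.1) - Y k) * (Y (k + l.1) ^ (p - 1) - Y k ^ (p - 1)))

def PP (θ : {l : Fin d → ℤ // l ≠ 0} → ℝ) (Y : (Fin d → ℤ) → ℝ) (p : ℝ)
    (l : {l : Fin d → ℤ // l ≠ 0}) (k : Fin d → ℤ) : ℝ :=
  θ l ^ 2 * ((nsqZ k : ℝ) - (ipZ k l.1 : ℝ) ^ 2 / (nsqZ l.1 : ℝ)) *
    ((Y (k + l.1) - Y k) * Y (k + l.1) ^ (p - 1))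

def QQ (θ : {l : Fin d → ℤ // l ≠ 0} → ℝ) (Y : (Fin d → ℤ) → ℝ) (p : ℝ)
    (l : {l : Fin d → ℤ // l ≠ 0}) (k : Fin d → ℤ) : ℝ :=
  θ l ^ 2 * ((nsqZ k : ℝ) - (ipZ k l.1 : ℝ) ^ 2 / (nsqZ l.1 : ℝ)) *
    ((Y (k + l.1) - Y k) * Y k ^ (p - 1))

end Stmt15Aux

open Stmt15Aux in
/-- Symmetrization identity for the energy-spectrum drift: for `p ≥ 1`, a finitely supported
symmetric family `θ` on `ℤ₀^d`, and `Y : ℤ^d → [0,∞)` with `Y 0 = 0` and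
`∑_k (1 + |k|²) Y_k < ∞`,
`∑_{k∈ℤ^d} ∑_{l∈ℤ₀^d} θ_l² |Π_l^⊥ k|² (Y_{k-l} - Y_k) Y_k^{p-1}
  = -(1/2) ∑_{l∈ℤ₀^d} ∑_{k∈ℤ^d} θ_l² |Π_l^⊥ k|² (Y_{k+l} - Y_k)(Y_{k+l}^{p-1} - Y_k^{p-1})`. -/
theorem stmt15 (d : ℕ) (hd : 1 ≤ d) (p : ℝ) (hp : 1 ≤ p)
    (θ : {l : Fin d → ℤ // l ≠ 0} → ℝ) (hfin : (Function.support θ).Finite)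
    (hsymm : ∀ k l : {l : Fin d → ℤ // l ≠ 0}, nsqZ k.1 = nsqZ l.1 → θ k = θ l)
    (Y : (Fin d → ℤ) → ℝ) (hY : ∀ k, 0 ≤ Y k) (hY0 : Y 0 = 0)
    (hsum : Summable fun k : Fin d → ℤ => (1 + (nsqZ k : ℝ)) * Y k) :
    ∑' (k : Fin d → ℤ), ∑' (l : {l : Fin d → ℤ // l ≠ 0}),
        θ l ^ 2 * ((nsqZ k : ℝ) - (ipZ k l.1 : ℝ) ^ 2 / (nsqZ l.1 : ℝ)) *
          ((Y (k - l.1) - Y k) * Y k ^ (p - 1)) =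
      -(1 / 2) * ∑' (l : {l : Fin d → ℤ // l ≠ 0}), ∑' (k : Fin d → ℤ),
        θ l ^ 2 * ((nsqZ k : ℝ) - (ipZ k l.1 : ℝ) ^ 2 / (nsqZ l.1 : ℝ)) *
          ((Y (k + l.1) - Y k) * (Y (k + l.1) ^ (p - 1) - Y k ^ (p - 1))) := by
  classical
  show (∑' (k : Fin d → ℤ), ∑' (l : {l : Fin d → ℤ // l ≠ 0}), FF θ Y p l k)
      = -(1 / 2) * ∑' (l : {l : Fin d → ℤ // l ≠ 0}), ∑' (k : Fin d → ℤ), GG θ Y p l k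
  -- basic facts about Y
  have hq : 0 ≤ p - 1 := by linarith
  have hYs : Summable Y := by
    refine Summable.of_nonneg_of_le hY (fun k => ?_) hsum
    have hn : (0:ℝ) ≤ (nsqZ k : ℝ) := by exact_mod_cast nsqZ_nonneg k
    nlinarith [hY k]
  have hT0 : 0 ≤ ∑' k, Y k := tsum_nonneg hY
  set B : ℝ := (1 + ∑' k, Y k) ^ (p - 1) with hBdef
  have hgB : ∀ k, |Y k ^ (p - 1)| ≤ B := by
    intro k
    rw [abs_of_nonneg (Real.rpow_nonneg (hY k) _)]
    refine Real.rpow_le_rpow (hY k) ?_ hq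
    have := Summable.le_tsum hYs k (fun j _ => hY j)
    linarith
  -- the support finset
  set S : Finset {l : Fin d → ℤ // l ≠ 0} := hfin.toFinset with hSdef
  have hmem : ∀ l, l ∈ S ↔ θ l ≠ 0 := fun l => hfin.mem_toFinset
  -- summability of building blocks
  have key : ∀ (l : {l : Fin d → ℤ // l ≠ 0}) (a : Fin d → ℤ) (g : (Fin d → ℤ) → ℝ),
      (∀ k, |g k| ≤ B) → Summable (fun k : Fin d → ℤ =>
        θ l ^ 2 * (((nsqZ k : ℝ) - (ipZ k l.1 : ℝ) ^ 2 / (nsqZ l.1 : ℝ)) * (Y (k + a) * g k))) :=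
    fun l a g hg => (summable_core Y hY hsum l.2 a g B hg).mul_left _
  have SFF : ∀ l, Summable (fun k => FF θ Y p l k) := by
    intro l
    have h1 := key l (-l.1) (fun k => Y k ^ (p - 1)) hgB
    have h2 := key l 0 (fun k => Y k ^ (p - 1)) hgB
    refine (h1.sub h2).congr fun k => ?_
    simp only [FF, add_zero, ← sub_eq_add_neg]
    ring
  have SPP : ∀ l, Summable (fun k => PP θ Y p l k) := by
    intro l
    have h1 := key l l.1 (fun k => Y (k + l.1) ^ (p - 1)) (fun k => hgB _)
    have h2 := key l 0 (fun k => Y (k + l.1) ^ (p - 1)) (fun k => hgB _)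
    refine (h1.sub h2).congr fun k => ?_
    simp only [PP, add_zero]
    ring
  have SQQ : ∀ l, Summable (fun k => QQ θ Y p l k) := by
    intro l
    have h1 := key l l.1 (fun k => Y k ^ (p - 1)) hgB
    have h2 := key l 0 (fun k => Y k ^ (p - 1)) hgB
    refine (h1.sub h2).congr fun k => ?_
    simp only [QQ, add_zero]
    ring
  -- key identity: A l = -P l
  have hAP : ∀ l, (∑' k, FF θ Y p l k) = -∑' k, PP θ Y p l k := by
    intro l
    rw [← (Equiv.addRight l.1).tsum_eq (FF θ Y p l), ← tsum_neg]
    refine tsum_congr fun k => ?_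
    have hshift := c_shift k l.2
    simp only [Equiv.coe_addRight, FF, PP, add_sub_cancel_right, hshift]
    ring
  -- negation symmetry: Q (ν l) = A l
  have hθν : ∀ l, θ (negPerm d l) = θ l := fun l => hsymm _ _ (nsqZ_neg l.1)
  have hQA : ∀ l, (∑' k, QQ θ Y p (negPerm d l) k) = ∑' k, FF θ Y p l k := by
    intro l
    refine tsum_congr fun k => ?_
    show QQ θ Y p (negPerm d l) k = FF θ Y p l k
    have h1 : (negPerm d l).1 = -l.1 := rfl
    simp only [QQ, FF, hθν l, h1, c_neg, ← sub_eq_add_neg]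
  -- negation symmetry on S
  have hνS : ∀ l, l ∈ S ↔ negPerm d l ∈ S := by
    intro l
    rw [hmem, hmem, hθν]
  have hνν : ∀ l, negPerm d (negPerm d l) = l := fun l => Subtype.ext (neg_neg _)
  have hQsum : (∑ l ∈ S, ∑' k, QQ θ Y p l k) = ∑ l ∈ S, ∑' k, FF θ Y p l k := by
    refine Finset.sum_equiv (negPerm d) hνS fun l _ => ?_
    conv_lhs => rw [← hνν l]
    exact hQA (negPerm d l)
  -- G = P - Q
  have hGPQ : ∀ l, (∑' k, GG θ Y p l k) = (∑' k, PP θ Y p l k) - ∑' k, QQ θ Y p l k := by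
    intro l
    rw [← Summable.tsum_sub (SPP l) (SQQ l)]
    exact tsum_congr fun k => by simp only [GG, PP, QQ]; ring
  -- assemble
  calc (∑' (k : Fin d → ℤ), ∑' (l : {l : Fin d → ℤ // l ≠ 0}), FF θ Y p l k)
      = ∑' (k : Fin d → ℤ), ∑ l ∈ S, FF θ Y p l k := by
        refine tsum_congr fun k => tsum_eq_sum fun l hl => ?_
        have : θ l = 0 := by simpa [hmem] using hl
        simp [FF, this]
    _ = ∑ l ∈ S, ∑' k, FF θ Y p l k := Summable.tsum_finsetSum fun l _ => SFF l
    _ = -(1 / 2) * ∑ l ∈ S, ∑' (k : Fin d → ℤ), GG θ Y p l k := by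
        have h1 : ∑ l ∈ S, (∑' (k : Fin d → ℤ), GG θ Y p l k)
            = (∑ l ∈ S, ∑' k, PP θ Y p l k) - ∑ l ∈ S, ∑' k, QQ θ Y p l k := by
          rw [← Finset.sum_sub_distrib]
          exact Finset.sum_congr rfl fun l _ => hGPQ l
        have h2 : ∑ l ∈ S, (∑' (k : Fin d → ℤ), PP θ Y p l k)
            = -∑ l ∈ S, ∑' k, FF θ Y p l k := by
          rw [← Finset.sum_neg_distrib]
          exact Finset.sum_congr rfl fun l _ => by rw [hAP l, neg_neg]
        rw [h1, h2, hQsum]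
        ring
    _ = -(1 / 2) * ∑' (l : {l : Fin d → ℤ // l ≠ 0}), ∑' (k : Fin d → ℤ), GG θ Y p l k := by
        congr 1
        refine (tsum_eq_sum fun l hl => ?_).symm
        have hθ0 : θ l = 0 := by simpa [hmem] using hl
        have : ∀ k, GG θ Y p l k = 0 := fun k => by simp [GG, hθ0]
        rw [tsum_congr this, tsum_zero]
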